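/- Let X ∈ ℝ^{k×m} be a full-rank matrix with k ≥ m ≥ 2, let c ≥ 0, and let B = 1ₘ1ₘᵀ be the m×m all-ones matrix. Then the operator norm (spectral norm) of X(XᵀX + cB)⁻¹Xᵀ equals 1. -/

import Mathlib

open Matrix
open scoped Matrix.Norms.L2Operator

private lemma euclid_inner_dot {k : ℕ} (a b : EuclideanSpace ℝ (Fin k)) :
    (inner ℝ a b : ℝ) = (WithLp.equiv 2 (Fin k → ℝ) a) ⬝ᵥ (WithLp.equiv 2 (Fin k → ℝ) b) := by
  simp [PiLp.inner_apply, dotProduct, mul_comm]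

/-- paper's Corollary A.2: for full-rank `X ∈ ℝ^{k×m}` with `k ≥ m ≥ 2`,
`c ≥ 0` and `B = 1ₘ1ₘᵀ`, the spectral norm of `X(XᵀX + cB)⁻¹Xᵀ` equals `1`. -/
theorem opNorm_projection_like_matrix (k m : ℕ) (hm : 2 ≤ m) (hk : m ≤ k)
    (X : Matrix (Fin k) (Fin m) ℝ) (hX : X.rank = m)
    (c : ℝ) (hc : 0 ≤ c) :
    ∀ B : Matrix (Fin m) (Fin m) ℝ,
      B = Matrix.of (fun _ _ => (1 : ℝ)) →
      ‖X * (Xᵀ * X + c • B)⁻¹ * Xᵀ‖ = 1 := by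
  intro B hB
  -- injectivity of X
  have hinj : Function.Injective X.mulVecLin := by
    rw [← LinearMap.ker_eq_bot]
    have h := X.mulVecLin.finrank_range_add_finrank_ker
    rw [show Module.finrank ℝ (LinearMap.range X.mulVecLin) = X.rank from rfl, hX,
      Module.finrank_pi, Fintype.card_fin] at h
    exact Submodule.finrank_eq_zero.mp (by omega)
  have hinj' : ∀ z : Fin m → ℝ, z ≠ 0 → X *ᵥ z ≠ 0 := by
    intro z hz h
    exact hz (hinj (by simpa [mulVecLin_apply] using h))
  -- positive definiteness of M
  set M : Matrix (Fin m) (Fin m) ℝ := Xᵀ * X + c • B with hMdef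
  have hXtX : (Xᵀ * X).PosDef := by
    refine Matrix.PosDef.of_dotProduct_mulVec_pos ?_ ?_
    · simpa using (isHermitian_conjTranspose_mul_self X)
    · intro x hx
      have : x ⬝ᵥ (Xᵀ * X) *ᵥ x = (X *ᵥ x) ⬝ᵥ (X *ᵥ x) := by
        rw [← mulVec_mulVec, dotProduct_mulVec, vecMul_transpose]
      rw [show star x = x from star_trivial x, this]
      simpa using (dotProduct_star_self_pos_iff (v := X *ᵥ x)).mpr (hinj' x hx)
  have hcB : (c • B).PosSemidef := by
    refine Matrix.PosSemidef.of_dotProduct_mulVec_nonneg ?_ ?_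
    · ext i j; simp [hB]
    · intro x
      have : x ⬝ᵥ (c • B) *ᵥ x = c * ((∑ j, x j) * (∑ j, x j)) := by
        simp only [hB, mulVec, dotProduct, Matrix.smul_apply, of_apply, smul_eq_mul, mul_one]
        rw [← Finset.mul_sum, ← Finset.sum_mul]
        ring
      rw [show star x = x from star_trivial x, this]
      exact mul_nonneg hc (mul_self_nonneg _)
  have hMpd : M.PosDef := hXtX.add_posSemidef hcB
  have hdet : IsUnit M.det := hMpd.det_pos.ne'.isUnit
  have hM1 : M * M⁻¹ = 1 := Matrix.mul_nonsing_inv M hdet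
  have hM2 : M⁻¹ * M = 1 := Matrix.nonsing_inv_mul M hdet
  set P : Matrix (Fin k) (Fin k) ℝ := X * M⁻¹ * Xᵀ with hPdef
  -- symmetry of M⁻¹
  have hMT : Mᵀ = M := by
    have : Mᴴ = M := hMpd.isHermitian
    simpa using this
  have hMiT : (M⁻¹)ᵀ = M⁻¹ := by
    rw [Matrix.transpose_nonsing_inv, hMT]
  -- key pointwise inequality
  have key : ∀ x : Fin k → ℝ, (P *ᵥ x) ⬝ᵥ (P *ᵥ x) ≤ x ⬝ᵥ (P *ᵥ x) := by
    intro x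
    set y : Fin m → ℝ := M⁻¹ *ᵥ (Xᵀ *ᵥ x) with hy
    have hPx : P *ᵥ x = X *ᵥ y := by
      rw [hPdef, ← mulVec_mulVec, ← mulVec_mulVec]
    have hMy : M *ᵥ y = Xᵀ *ᵥ x := by
      rw [hy, mulVec_mulVec, hM1, one_mulVec]
    have h1 : (P *ᵥ x) ⬝ᵥ (P *ᵥ x) = y ⬝ᵥ ((Xᵀ * X) *ᵥ y) := by
      rw [hPx, show y ⬝ᵥ ((Xᵀ * X) *ᵥ y) = (X *ᵥ y) ⬝ᵥ (X *ᵥ y) from by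
        rw [← mulVec_mulVec, dotProduct_mulVec, vecMul_transpose]]
    have h2 : x ⬝ᵥ (P *ᵥ x) = y ⬝ᵥ (M *ᵥ y) := by
      rw [hPx, dotProduct_mulVec, ← mulVec_transpose, ← hMy, dotProduct_comm]
    have h3 : y ⬝ᵥ (M *ᵥ y) = y ⬝ᵥ ((Xᵀ * X) *ᵥ y) + c * ((∑ j, y j) * (∑ j, y j)) := by
      rw [hMdef, add_mulVec, dotProduct_add]
      congr 1
      simp only [hB, mulVec, dotProduct, Matrix.smul_apply, of_apply, smul_eq_mul, mul_one]
      rw [← Finset.mul_sum, ← Finset.sum_mul]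
      ring
    rw [h1, h2, h3]
    nlinarith [mul_self_nonneg (∑ j, y j)]
  -- upper bound
  have hub : ‖P‖ ≤ 1 := by
    rw [Matrix.l2_opNorm_def]
    refine ContinuousLinearMap.opNorm_le_bound _ zero_le_one (fun x => ?_)
    rw [one_mul]
    set v : EuclideanSpace ℝ (Fin k) :=
      (LinearEquiv.trans Matrix.toEuclideanLin LinearMap.toContinuousLinearMap P) x with hv
    have hveq : WithLp.equiv 2 (Fin k → ℝ) v = P *ᵥ (WithLp.equiv 2 (Fin k → ℝ) x) := by
      rw [hv]
      exact Matrix.ofLp_toEuclideanLin_apply P x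
    have hkey := key (WithLp.equiv 2 (Fin k → ℝ) x)
    have hvv : ‖v‖ * ‖v‖ ≤ ‖x‖ * ‖v‖ := by
      calc ‖v‖ * ‖v‖ = inner ℝ v v := (real_inner_self_eq_norm_mul_norm v).symm
        _ = (WithLp.equiv 2 (Fin k → ℝ) v) ⬝ᵥ (WithLp.equiv 2 (Fin k → ℝ) v) :=
            euclid_inner_dot v v
        _ ≤ (WithLp.equiv 2 (Fin k → ℝ) x) ⬝ᵥ (WithLp.equiv 2 (Fin k → ℝ) v) := by
            rw [hveq]; exact hkey
        _ = inner ℝ x v := (euclid_inner_dot x v).symm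
        _ ≤ ‖x‖ * ‖v‖ := real_inner_le_norm x v
    rcases eq_or_lt_of_le (norm_nonneg v) with h0 | h0
    · rw [← h0]; exact norm_nonneg x
    · exact le_of_mul_le_mul_right hvv h0
  -- lower bound: eigenvector
  have hlb : 1 ≤ ‖P‖ := by
    set z : Fin m → ℝ := Pi.single ⟨0, by omega⟩ 1 - Pi.single ⟨1, by omega⟩ 1 with hz
    have hzne : z ≠ 0 := by
      intro h
      have := congrFun h ⟨0, by omega⟩
      simp [hz, Pi.single_apply, Fin.ext_iff] at this
    have hzsum : ∑ j, z j = 0 := by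
      rw [hz]
      simp [Finset.sum_sub_distrib]
    have hBz : B *ᵥ z = 0 := by
      ext i
      simpa [hB, mulVec, dotProduct] using hzsum
    have hMz : M *ᵥ z = (Xᵀ * X) *ᵥ z := by
      rw [hMdef, add_mulVec, smul_mulVec, hBz, smul_zero, add_zero]
    set u : Fin k → ℝ := X *ᵥ z with hu
    have hune : u ≠ 0 := hinj' z hzne
    have h0 : Xᵀ *ᵥ u = M *ᵥ z := by rw [hu, mulVec_mulVec, ← hMz]
    have hPu : P *ᵥ u = u := by
      calc P *ᵥ u = X *ᵥ (M⁻¹ *ᵥ (Xᵀ *ᵥ u)) := by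
            rw [hPdef]; simp only [← mulVec_mulVec]
        _ = X *ᵥ (M⁻¹ *ᵥ (M *ᵥ z)) := by rw [h0]
        _ = X *ᵥ z := by
            simp only [mulVec_mulVec]; rw [hM2, Matrix.mul_one]
        _ = u := hu.symm
    set ue : EuclideanSpace ℝ (Fin k) := (WithLp.equiv 2 (Fin k → ℝ)).symm u with hue
    have hle := Matrix.l2_opNorm_mulVec P ue
    have hnorm : ‖(EuclideanSpace.equiv (Fin k) ℝ).symm (P *ᵥ ue)‖ = ‖ue‖ :=
      congrArg (fun w => ‖(EuclideanSpace.equiv (Fin k) ℝ).symm w‖) hPu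
    rw [hnorm] at hle
    have hpos : 0 < ‖ue‖ := by
      rw [norm_pos_iff]
      intro h
      apply hune
      have := congrArg (WithLp.equiv 2 (Fin k → ℝ)) h
      simpa [hue] using this
    exact le_of_mul_le_mul_right (by simpa [one_mul] using hle) hpos
  exact le_antisymm hub hlb
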